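/- Let Δ ⊆ M_ℝ be a reflexive polytope with nef-partition Δ = Δ₁ + ⋯ + Δ_r, with piecewise linear decomposition φ = φ₁ + ⋯ + φ_r on the normal fan Σ, and let ∇_i be the convex hull of 0 and all primitive ray generators e_j of Σ with φ_i(e_j) = 1. Then for all i, j and all m ∈ Δ_j, n ∈ ∇_i, one has ⟨m, n⟩ ≥ -δ_{ij} (Kronecker delta). -/

import Mathlib

open scoped Pointwise

namespace BB

abbrev V (n : ℕ) : Type := Fin n → ℝ

/-- The standard pairing between `M_ℝ` and `N_ℝ` (both identified with `ℝⁿ`). -/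
def pair {n : ℕ} (m v : V n) : ℝ := ∑ i, m i * v i

/-- A point of `ℝⁿ` is a lattice point if all its coordinates are integers. -/
def IsLatticePt {n : ℕ} (m : V n) : Prop := ∀ i, ∃ z : ℤ, m i = (z : ℝ)

/-- A lattice polytope: convex hull of finitely many lattice points. -/
def IsLatticePolytope {n : ℕ} (P : Set (V n)) : Prop :=
  ∃ S : Finset (V n), (∀ m ∈ S, IsLatticePt m) ∧ P = convexHull ℝ (S : Set (V n))

/-- The polar dual `P* = {v | ⟨m,v⟩ ≥ -1 for all m ∈ P}`. -/
def polar {n : ℕ} (P : Set (V n)) : Set (V n) := {v | ∀ m ∈ P, -1 ≤ pair m v}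

/-- A reflexive polytope: a lattice polytope with `0` in its interior whose polar
dual is again a lattice polytope. -/
def IsReflexive {n : ℕ} (P : Set (V n)) : Prop :=
  IsLatticePolytope P ∧ (0 : V n) ∈ interior P ∧ IsLatticePolytope (polar P)

/-- The support function `supp P v = -inf{⟨m,v⟩ | m ∈ P}`; for `P = Δᵢ` and `v ∈ N_ℝ`
this is the piecewise linear function `φᵢ(v)` of the nef-partition. -/
noncomputable def supp {n : ℕ} (P : Set (V n)) (v : V n) : ℝ :=
  sSup ((fun m => -(pair m v)) '' P)

end BB

namespace BB

lemma pair_sum_left {n : ℕ} {ι : Type*} [Fintype ι] (g : ι → V n) (v : V n) :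
    pair (∑ k, g k) v = ∑ k, pair (g k) v := by
  simp only [pair, Finset.sum_apply, Finset.sum_mul]
  rw [Finset.sum_comm]

lemma continuous_negpair {n : ℕ} (v : V n) : Continuous fun m : V n => -(pair m v) := by
  refine (continuous_finset_sum _ fun i _ => ?_).neg
  exact (continuous_apply i).mul continuous_const

lemma supp_spec {n : ℕ} {P : Set (V n)} (hP : IsLatticePolytope P) (hne : P.Nonempty)
    (v : V n) : ∃ x ∈ P, supp P v = -(pair x v) ∧ ∀ m ∈ P, -(pair m v) ≤ supp P v := by
  obtain ⟨S, -, rfl⟩ := hP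
  have hcomp : IsCompact (convexHull ℝ (S : Set (V n))) := S.finite_toSet.isCompact_convexHull ℝ
  obtain ⟨x, hxP, hx⟩ := hcomp.exists_isMaxOn hne (continuous_negpair v).continuousOn
  have hgr : IsGreatest ((fun m => -(pair m v)) '' convexHull ℝ (S : Set (V n)))
      (-(pair x v)) := ⟨Set.mem_image_of_mem _ hxP, by rintro y ⟨m, hm, rfl⟩; exact hx hm⟩
  have heq : supp (convexHull ℝ (S : Set (V n))) v = -(pair x v) := hgr.csSup_eq
  exact ⟨x, hxP, heq, fun m hm => heq ▸ hgr.2 (Set.mem_image_of_mem _ hm)⟩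

theorem stmt0 {n r : ℕ} (Δ : Set (V n)) (D : Fin r → Set (V n))
    (hΔrefl : IsReflexive Δ)
    (hDlat : ∀ i, IsLatticePolytope (D i))
    (hΔ : Δ = ∑ i, D i)
    (E : Finset (V n))
    (hE : (E : Set (V n)) = Set.extremePoints ℝ (polar Δ))
    (hnef : ∀ i, ∀ e ∈ E, supp (D i) e = 0 ∨ supp (D i) e = 1)
    (Nb : Fin r → Set (V n))
    (hNb : ∀ i, Nb i = convexHull ℝ ({0} ∪ {e : V n | e ∈ E ∧ supp (D i) e = 1})) :
    ∀ i j : Fin r, ∀ m ∈ D j, ∀ v ∈ Nb i,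
      -(if i = j then (1:ℝ) else 0) ≤ pair m v := by
  intro i j m hm v hv
  have h0Δ : (0 : V n) ∈ Δ := interior_subset hΔrefl.2.1
  have hne : ∀ k, (D k).Nonempty := by
    intro k
    have h0 : (0 : V n) ∈ ∑ k, D k := hΔ ▸ h0Δ
    rw [Set.mem_fintype_sum] at h0
    obtain ⟨g, hg, -⟩ := h0
    exact ⟨g k, hg k⟩
  set c : ℝ := if i = j then (1:ℝ) else 0 with hcdef
  have hc0 : (0:ℝ) ≤ c := by unfold c; split <;> norm_num
  have hlin : IsLinearMap ℝ (pair m) := by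
    constructor
    · intro a b; simp [pair, mul_add, Finset.sum_add_distrib]
    · intro s a; simp [pair, Finset.mul_sum, mul_comm, mul_assoc, mul_left_comm]
  have hconv : Convex ℝ {w : V n | -c ≤ pair m w} := convex_halfSpace_ge hlin (-c)
  rw [hNb i] at hv
  refine convexHull_min ?_ hconv hv
  rintro w hw
  rcases hw with hw | ⟨hwE, hw1⟩
  · rcases hw with rfl
    have : pair m (0 : V n) = 0 := by simp [pair]
    simp only [Set.mem_setOf_eq, this]
    linarith
  · -- w ∈ E, supp (D i) w = 1
    have hwpolar : w ∈ polar Δ := by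
      have := hE ▸ Finset.mem_coe.mpr hwE
      exact extremePoints_subset this
    -- sum of supports ≤ 1
    have hsum : ∑ k, supp (D k) w ≤ 1 := by
      have hpick : ∀ k, ∃ x ∈ D k, supp (D k) w = -(pair x w) := by
        intro k
        obtain ⟨x, hx, hxe, -⟩ := supp_spec (hDlat k) (hne k) w
        exact ⟨x, hx, hxe⟩
      choose g hg hge using hpick
      have hgΔ : (∑ k, g k) ∈ Δ := by
        rw [hΔ, Set.mem_fintype_sum]
        exact ⟨g, hg, rfl⟩
      have h1 : -1 ≤ pair (∑ k, g k) w := hwpolar _ hgΔ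
      rw [pair_sum_left] at h1
      calc ∑ k, supp (D k) w = ∑ k, -(pair (g k) w) := by
            exact Finset.sum_congr rfl fun k _ => hge k
        _ = -(∑ k, pair (g k) w) := by rw [Finset.sum_neg_distrib]
        _ ≤ 1 := by linarith
    have hnonneg : ∀ k, 0 ≤ supp (D k) w := by
      intro k; rcases hnef k w hwE with h | h <;> rw [h] <;> norm_num
    obtain ⟨-, -, -, hbound⟩ := supp_spec (hDlat j) (hne j) w
    have hmw : -(pair m w) ≤ supp (D j) w := hbound m hm
    by_cases hij : i = j
    · have : supp (D j) w ≤ 1 := by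
        rcases hnef j w hwE with h | h <;> rw [h] <;> norm_num
      have : -c ≤ -(supp (D j) w) ∨ True := Or.inr trivial
      simp only [Set.mem_setOf_eq, hcdef, if_pos hij]
      have h1 : supp (D j) w ≤ 1 := by
        rcases hnef j w hwE with h | h <;> rw [h] <;> norm_num
      linarith
    · -- supp (D j) w ≤ 0
      have hsub : supp (D i) w + supp (D j) w ≤ ∑ k, supp (D k) w := by
        have := Finset.sum_le_sum_of_subset_of_nonneg
          (Finset.subset_univ ({i, j} : Finset (Fin r))) (fun k _ _ => hnonneg k)
        rwa [Finset.sum_pair hij] at this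
      have hj0 : supp (D j) w ≤ 0 := by rw [hw1] at hsub; linarith
      simp only [Set.mem_setOf_eq, hcdef, if_neg hij]
      linarith

end BB
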